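/- Let V, g, φ, ξ, η, A, D be as in the context, let k be a nonzero real number, and suppose Aξ = αξ + βU for some real numbers α, β with β ≠ 0 and some unit vector U ∈ D (the non-Hopf case). If A_T^{(k)}(φX, Y) = φ(A_T^{(k)}(X, Y)) for all X, Y ∈ D, then A(φU) = 0, AU = βξ, and AZ = 0 for every Z ∈ D orthogonal to both U and φU; in particular g(AX, Y) = 0 for all X, Y ∈ D (the pointwise ruled condition). (Theorem 6, non-Hopf case.) -/

import Mathlib

open scoped InnerProductSpace

/-- The `k`-th Cho operator `F^{(k)}_X Y = g(φ(AX), Y)·ξ − η(Y)·φ(AX) − k·η(X)·φY`. -/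
noncomputable def choF {V : Type*} [NormedAddCommGroup V] [InnerProductSpace ℝ V]
    (φ A : V →ₗ[ℝ] V) (ξ : V) (k : ℝ) (X Y : V) : V :=
  ⟪φ (A X), Y⟫_ℝ • ξ - ⟪Y, ξ⟫_ℝ • φ (A X) - (k * ⟪X, ξ⟫_ℝ) • φ Y

/-- The `k`-th torsion operator `T^{(k)}_X Y = F^{(k)}_X Y − F^{(k)}_Y X`. -/
noncomputable def torT {V : Type*} [NormedAddCommGroup V] [InnerProductSpace ℝ V]
    (φ A : V →ₗ[ℝ] V) (ξ : V) (k : ℝ) (X Y : V) : V :=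
  choF φ A ξ k X Y - choF φ A ξ k Y X

/-- `A_T^{(k)}(X, Y) = T^{(k)}_X (A Y) − A (T^{(k)}_X Y)`. -/
noncomputable def AT {V : Type*} [NormedAddCommGroup V] [InnerProductSpace ℝ V]
    (φ A : V →ₗ[ℝ] V) (ξ : V) (k : ℝ) (X Y : V) : V :=
  torT φ A ξ k X (A Y) - A (torT φ A ξ k X Y)

theorem thm6_nonHopf {V : Type*} [NormedAddCommGroup V] [InnerProductSpace ℝ V]
    [FiniteDimensional ℝ V] (hdim : 5 ≤ Module.finrank ℝ V)
    (φ : V →ₗ[ℝ] V) (ξ : V) (hξ : ‖ξ‖ = 1)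
    (hφφ : ∀ X : V, φ (φ X) = -X + ⟪X, ξ⟫_ℝ • ξ)
    (hφg : ∀ X Y : V, ⟪φ X, φ Y⟫_ℝ = ⟪X, Y⟫_ℝ - ⟪X, ξ⟫_ℝ * ⟪Y, ξ⟫_ℝ)
    (A : V →ₗ[ℝ] V) (hA : ∀ X Y : V, ⟪A X, Y⟫_ℝ = ⟪X, A Y⟫_ℝ)
    (k : ℝ) (hk : k ≠ 0)
    (α β : ℝ) (hβ : β ≠ 0) (U : V) (hU : ‖U‖ = 1) (hUξ : ⟪U, ξ⟫_ℝ = 0)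
    (hAξ : A ξ = α • ξ + β • U)
    (hphi : ∀ X Y : V, ⟪X, ξ⟫_ℝ = 0 → ⟪Y, ξ⟫_ℝ = 0 →
      AT φ A ξ k (φ X) Y = φ (AT φ A ξ k X Y)) :
    A (φ U) = 0 ∧ A U = β • ξ ∧
      (∀ Z : V, ⟪Z, ξ⟫_ℝ = 0 → ⟪Z, U⟫_ℝ = 0 → ⟪Z, φ U⟫_ℝ = 0 → A Z = 0) ∧
      (∀ X Y : V, ⟪X, ξ⟫_ℝ = 0 → ⟪Y, ξ⟫_ℝ = 0 → ⟪A X, Y⟫_ℝ = 0) := by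
  -- basic facts
  have hξξ : ⟪ξ, ξ⟫_ℝ = 1 := by
    rw [real_inner_self_eq_norm_mul_norm, hξ, one_mul]
  have hUU : ⟪U, U⟫_ℝ = 1 := by
    rw [real_inner_self_eq_norm_mul_norm, hU, one_mul]
  have hφξ : φ ξ = 0 := by
    have h := hφg ξ ξ
    rw [hξξ] at h
    have : ⟪φ ξ, φ ξ⟫_ℝ = 0 := by linarith
    exact inner_self_eq_zero.mp this
  have hηφ : ∀ X : V, ⟪φ X, ξ⟫_ℝ = 0 := by
    intro X
    have h1 := hφg (φ X) (φ X)
    have h2 := hφg X X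
    rw [hφφ X] at h1
    simp only [inner_add_add_self, inner_neg_neg, inner_neg_left, inner_neg_right,
      real_inner_smul_left, real_inner_smul_right, hξξ] at h1
    have hc : ⟪ξ, X⟫_ℝ = ⟪X, ξ⟫_ℝ := real_inner_comm _ _
    rw [hc] at h1
    have : ⟪φ X, ξ⟫_ℝ * ⟪φ X, ξ⟫_ℝ = 0 := by linarith
    exact mul_self_eq_zero.mp this
  have hskew : ∀ X Y : V, ⟪φ X, Y⟫_ℝ = -⟪X, φ Y⟫_ℝ := by
    intro X Y
    have h := hφg X (φ Y)
    rw [hφφ Y] at h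
    simp only [inner_add_right, inner_neg_right, real_inner_smul_right, hηφ, mul_zero,
      add_zero] at h
    linarith
  -- inner products with ξ of A-images
  have hAXξ : ∀ X : V, ⟪A X, ξ⟫_ℝ = α * ⟪X, ξ⟫_ℝ + β * ⟪X, U⟫_ℝ := by
    intro X
    rw [hA X ξ, hAξ, inner_add_right, real_inner_smul_right, real_inner_smul_right]
  have hUφU : ⟪U, φ U⟫_ℝ = 0 := by
    have h := hskew U U
    have h2 : ⟪φ U, U⟫_ℝ = ⟪U, φ U⟫_ℝ := real_inner_comm _ _
    linarith
  have hφUφU : ⟪φ U, φ U⟫_ℝ = 1 := by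
    rw [hφg, hUξ, hUU]; ring
  have hφUξ : ⟪φ U, ξ⟫_ℝ = 0 := hηφ U
  -- a vector orthogonal to all of D is a multiple of ξ
  have hDperp : ∀ W : V, (∀ Z : V, ⟪Z, ξ⟫_ℝ = 0 → ⟪W, Z⟫_ℝ = 0) → W = ⟪W, ξ⟫_ℝ • ξ := by
    intro W h
    set Z := W - ⟪W, ξ⟫_ℝ • ξ with hZdef
    have hZξ : ⟪Z, ξ⟫_ℝ = 0 := by
      simp [hZdef, inner_sub_left, real_inner_smul_left, hξξ, hξ]
    have h1 : ⟪W, Z⟫_ℝ = 0 := h Z hZξ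
    have h2 : ⟪Z, Z⟫_ℝ = 0 := by
      have : ⟪ξ, Z⟫_ℝ = 0 := by rw [real_inner_comm]; exact hZξ
      rw [hZdef, inner_sub_left, real_inner_smul_left, this, mul_zero, sub_zero]
      rw [← hZdef]; exact h1
    exact sub_eq_zero.mp (inner_self_eq_zero.mp h2)
  -- explicit formula for AT on D × D
  have hAT : ∀ X Y : V, ⟪X, ξ⟫_ℝ = 0 → ⟪Y, ξ⟫_ℝ = 0 →
      AT φ A ξ k X Y =
        ⟪φ (A X), A Y⟫_ℝ • ξ - ⟪A Y, ξ⟫_ℝ • φ (A X) - ⟪φ (A (A Y)), X⟫_ℝ • ξ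
          + (k * ⟪A Y, ξ⟫_ℝ) • φ X - (⟪φ (A X), Y⟫_ℝ - ⟪φ (A Y), X⟫_ℝ) • A ξ := by
    intro X Y hX hY
    simp only [AT, torT, choF, hX, hY, mul_zero, zero_smul, smul_zero, sub_zero, zero_sub,
      map_sub, map_smul, sub_smul]
    module
  -- the scalar consequence of the hypothesis, paired against Z ∈ D
  have SE : ∀ X Y Z : V, ⟪X, ξ⟫_ℝ = 0 → ⟪Y, ξ⟫_ℝ = 0 → ⟪Z, ξ⟫_ℝ = 0 →
      -(⟪A Y, ξ⟫_ℝ * ⟪φ (A (φ X)), Z⟫_ℝ)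
        - β * (⟪φ (A (φ X)), Y⟫_ℝ - ⟪φ (A Y), φ X⟫_ℝ) * ⟪U, Z⟫_ℝ
      = ⟪A Y, ξ⟫_ℝ * ⟪A X, Z⟫_ℝ
        - β * (⟪φ (A X), Y⟫_ℝ - ⟪φ (A Y), X⟫_ℝ) * ⟪φ U, Z⟫_ℝ := by
    intro X Y Z hX hY hZ
    have hξZ : ⟪ξ, Z⟫_ℝ = 0 := by rw [real_inner_comm]; exact hZ
    have h := congrArg (fun W : V => ⟪W, Z⟫_ℝ) (hphi X Y hX hY)
    rw [hAT (φ X) Y (hηφ X) hY, hAT X Y hX hY] at h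
    simp only [map_sub, map_add, map_smul, hφξ, hφφ, hAξ, map_neg, hX, zero_smul, add_zero,
      smul_zero] at h
    simp only [inner_sub_left, inner_add_left, inner_neg_left, real_inner_smul_left,
      smul_add, smul_neg, smul_smul, hξZ, mul_zero, sub_zero, zero_sub, add_zero,
      inner_smul_left, RCLike.inner_apply, map_mul, conj_trivial, inner_zero_left] at h
    ring_nf at h ⊢
    linarith [h]
  -- Step A1: S X Y = 0 when Y ⊥ U
  have hS0 : ∀ X Y : V, ⟪X, ξ⟫_ℝ = 0 → ⟪Y, ξ⟫_ℝ = 0 → ⟪Y, U⟫_ℝ = 0 →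
      ⟪φ (A X), Y⟫_ℝ - ⟪φ (A Y), X⟫_ℝ = 0 := by
    intro X Y hX hY hYU
    have hAYξ : ⟪A Y, ξ⟫_ℝ = 0 := by rw [hAXξ, hY, hYU]; ring
    have h := SE X Y (φ U) hX hY hφUξ
    rw [hAYξ, hUφU, hφUφU] at h
    have hβS : β * (⟪φ (A X), Y⟫_ℝ - ⟪φ (A Y), X⟫_ℝ) = 0 := by linarith
    exact (mul_eq_zero.mp hβS).resolve_left hβ
  -- Step A2: S X U = 0 for X ∈ D
  have hSU : ∀ X : V, ⟪X, ξ⟫_ℝ = 0 → ⟪φ (A X), U⟫_ℝ - ⟪φ (A U), X⟫_ℝ = 0 := by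
    intro X hX
    have hX'ξ : ⟪X - ⟪X, U⟫_ℝ • U, ξ⟫_ℝ = 0 := by
      rw [inner_sub_left, real_inner_smul_left, hX, hUξ]; ring
    have hX'U : ⟪X - ⟪X, U⟫_ℝ • U, U⟫_ℝ = 0 := by
      rw [inner_sub_left, real_inner_smul_left, hUU]; ring
    have h := hS0 U (X - ⟪X, U⟫_ℝ • U) hUξ hX'ξ hX'U
    simp only [map_sub, map_smul, inner_sub_right, inner_sub_left, real_inner_smul_right,
      real_inner_smul_left, LinearMap.map_smul] at h
    have hc : ⟪φ (A U), X⟫_ℝ = ⟪X, φ (A U)⟫_ℝ := real_inner_comm _ _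
    have hc2 : ⟪φ (A X), U⟫_ℝ = ⟪U, φ (A X)⟫_ℝ := real_inner_comm _ _
    linarith
  -- Step A3: S X Y = 0 for all X, Y ∈ D
  have hS : ∀ X Y : V, ⟪X, ξ⟫_ℝ = 0 → ⟪Y, ξ⟫_ℝ = 0 →
      ⟪φ (A X), Y⟫_ℝ - ⟪φ (A Y), X⟫_ℝ = 0 := by
    intro X Y hX hY
    have hY'ξ : ⟪Y - ⟪Y, U⟫_ℝ • U, ξ⟫_ℝ = 0 := by
      rw [inner_sub_left, real_inner_smul_left, hY, hUξ]; ring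
    have hY'U : ⟪Y - ⟪Y, U⟫_ℝ • U, U⟫_ℝ = 0 := by
      rw [inner_sub_left, real_inner_smul_left, hUU]; ring
    have h := hS0 X (Y - ⟪Y, U⟫_ℝ • U) hX hY'ξ hY'U
    have h2 := hSU X hX
    simp only [map_sub, map_smul, inner_sub_right, inner_sub_left, real_inner_smul_right,
      real_inner_smul_left, LinearMap.map_smul] at h
    have h2' : ⟪φ (A X), U⟫_ℝ = ⟪φ (A U), X⟫_ℝ := by linarith
    rw [h2'] at h
    linarith
  -- Step B: φA + Aφ maps D into ℝ·ξ
  have hstar : ∀ X : V, ⟪X, ξ⟫_ℝ = 0 → φ (A X) + A (φ X) = (β * ⟪φ X, U⟫_ℝ) • ξ := by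
    intro X hX
    have hperp : ∀ Z : V, ⟪Z, ξ⟫_ℝ = 0 → ⟪φ (A X) + A (φ X), Z⟫_ℝ = 0 := by
      intro Z hZ
      rw [inner_add_left]
      have h1 : ⟪A (φ X), Z⟫_ℝ = ⟪φ X, A Z⟫_ℝ := hA _ _
      have h2 : ⟪φ X, A Z⟫_ℝ = -⟪X, φ (A Z)⟫_ℝ := hskew _ _
      have h3 : ⟪X, φ (A Z)⟫_ℝ = ⟪φ (A Z), X⟫_ℝ := real_inner_comm _ _
      have h4 := hS X Z hX hZ
      linarith
    have hw := hDperp _ hperp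
    have hcoef : ⟪φ (A X) + A (φ X), ξ⟫_ℝ = β * ⟪φ X, U⟫_ℝ := by
      rw [inner_add_left, hηφ, hA, hAξ, inner_add_right, real_inner_smul_right,
        real_inner_smul_right, hηφ]; ring
    rw [hcoef] at hw
    exact hw
  have hφAφ : ∀ X : V, ⟪X, ξ⟫_ℝ = 0 → φ (A (φ X)) = A X - (β * ⟪X, U⟫_ℝ) • ξ := by
    intro X hX
    have h := hstar (φ X) (hηφ X)
    have h' : φ (A (φ X)) = (β * ⟪φ (φ X), U⟫_ℝ) • ξ - A (φ (φ X)) := eq_sub_of_add_eq h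
    rw [hφφ X, hX, zero_smul, add_zero] at h'
    rw [h']
    simp only [inner_neg_left, map_neg, mul_neg, neg_smul]
    module
  -- Step C: ⟪A X, Z⟫ = 0 for X, Z ∈ D
  have hAD : ∀ X Z : V, ⟪X, ξ⟫_ℝ = 0 → ⟪Z, ξ⟫_ℝ = 0 → ⟪A X, Z⟫_ℝ = 0 := by
    intro X Z hX hZ
    have hAUξ : ⟪A U, ξ⟫_ℝ = β := by rw [hAXξ, hUξ, hUU]; ring
    have h := SE X U Z hX hUξ hZ
    have hs1 := hS (φ X) U (hηφ X) hUξ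
    have hs2 := hS X U hX hUξ
    rw [hAUξ, hs1, hs2, hφAφ X hX] at h
    have hξZ : ⟪ξ, Z⟫_ℝ = 0 := by rw [real_inner_comm]; exact hZ
    simp only [inner_sub_left, real_inner_smul_left, hξZ, mul_zero, sub_zero, zero_mul] at h
    have hβA : β * ⟪A X, Z⟫_ℝ = 0 := by linarith
    exact (mul_eq_zero.mp hβA).resolve_left hβ
  have hAform : ∀ X : V, ⟪X, ξ⟫_ℝ = 0 → A X = (β * ⟪X, U⟫_ℝ) • ξ := by
    intro X hX
    have h := hDperp (A X) (fun Z hZ => hAD X Z hX hZ)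
    rw [hAXξ X, hX] at h
    rw [h]; ring_nf
  refine ⟨?_, ?_, ?_, fun X Y hX hY => hAD X Y hX hY⟩
  · rw [hAform (φ U) (hηφ U)]
    rw [show ⟪φ U, U⟫_ℝ = 0 from by rw [real_inner_comm]; exact hUφU]
    simp
  · rw [hAform U hUξ, hUU, mul_one]
  · intro Z hZ hZU _
    rw [hAform Z hZ, hZU]
    simp
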